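/- Let b ∈ ℝ^k, let p be an integer with 1 ≤ p ≤ k, and let b⁻ be the componentwise negative part of b. If b⁻ ≠ 0, then the minimum of bᵀx over all x ∈ ℝ^k with ‖x‖₂ = 1, x ≥ 0, and ‖x‖₀ ≤ p equals -‖b⁻ₚ‖₂, where b⁻ₚ is obtained from b⁻ by keeping its p largest components and setting the rest to zero; the minimizer is b⁻ₚ/‖b⁻ₚ‖₂. -/

import Mathlib

/-- With the additional sparsity constraint `‖x‖₀ ≤ p`, if `b⁻ ≠ 0`, the
minimum of `bᵀx` over the unit sphere intersected with the nonnegative orthant and the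
sparsity set is `-‖b⁻ₚ‖`, where `b⁻ₚ` keeps the `p` largest entries of `b⁻` and zeros the
rest; the minimizer is `b⁻ₚ/‖b⁻ₚ‖`. -/
theorem stmt_2 (k p : ℕ) (hp : 1 ≤ p) (hpk : p ≤ k)
    (b bm bp : EuclideanSpace ℝ (Fin k))
    (hbm : ∀ i, bm i = max (-(b i)) 0) (hne : bm ≠ 0)
    (S : Finset (Fin k)) (hScard : S.card = p)
    (hStop : ∀ i ∈ S, ∀ j ∉ S, bm j ≤ bm i)
    (hbp : ∀ i, bp i = if i ∈ S then bm i else 0) :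
    IsLeast {v : ℝ | ∃ x : EuclideanSpace ℝ (Fin k),
        ‖x‖ = 1 ∧ (∀ i, 0 ≤ x i) ∧
        (Finset.univ.filter (fun i => x i ≠ 0)).card ≤ p ∧
        v = ∑ i, b i * x i} (-‖bp‖) ∧
      ‖(‖bp‖⁻¹ • bp : EuclideanSpace ℝ (Fin k))‖ = 1 ∧
      (∀ i, 0 ≤ (‖bp‖⁻¹ • bp : EuclideanSpace ℝ (Fin k)) i) ∧
      (Finset.univ.filter (fun i => (‖bp‖⁻¹ • bp : EuclideanSpace ℝ (Fin k)) i ≠ 0)).card ≤ p ∧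
      ∑ i, b i * (‖bp‖⁻¹ • bp : EuclideanSpace ℝ (Fin k)) i = -‖bp‖ := by
  -- basic facts
  have hbmnn : ∀ i, 0 ≤ bm i := fun i => by rw [hbm i]; exact le_max_right _ _
  have hbpnn : ∀ i, 0 ≤ bp i := fun i => by
    rw [hbp i]; split
    · exact hbmnn _
    · exact le_refl 0
  -- bp ≠ 0
  have hbpne : bp ≠ 0 := by
    intro h0
    obtain ⟨j, hj⟩ : ∃ j, bm j ≠ 0 := by
      by_contra h; push_neg at h; exact hne (PiLp.ext h)
    have hjpos : 0 < bm j := lt_of_le_of_ne (hbmnn j) (Ne.symm hj)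
    obtain ⟨i, hiS⟩ : ∃ i, i ∈ S := Finset.card_pos.mp (by omega) |>.exists_mem
    have : bp i = 0 := by rw [h0]; rfl
    rw [hbp i, if_pos hiS] at this
    by_cases hjS : j ∈ S
    · have : bp j = 0 := by rw [h0]; rfl
      rw [hbp j, if_pos hjS] at this; exact hj this
    · have := hStop i hiS j hjS
      linarith
  have hbpnorm : 0 < ‖bp‖ := norm_pos_iff.mpr hbpne
  -- b i * bm i = -(bm i)^2
  have hkey : ∀ i, b i * bm i = -(bm i)^2 := by
    intro i
    rcases le_or_gt (-(b i)) 0 with h | h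
    · have : bm i = 0 := by rw [hbm i, max_eq_right h]
      rw [this]; ring
    · have : bm i = -(b i) := by rw [hbm i, max_eq_left h.le]
      rw [this]; ring
  have hkeyp : ∀ i, b i * bp i = -(bp i)^2 := by
    intro i; rw [hbp i]; split
    · exact hkey i
    · ring
  -- norm identities
  have hnormsq : ∀ y : EuclideanSpace ℝ (Fin k), ‖y‖^2 = ∑ i, (y i)^2 := by
    intro y
    rw [EuclideanSpace.norm_eq, Real.sq_sqrt (Finset.sum_nonneg fun i _ => sq_nonneg _)]
    congr 1; ext i; rw [Real.norm_eq_abs, sq_abs]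
  have hbpsq : ‖bp‖^2 = ∑ i ∈ S, (bm i)^2 := by
    rw [hnormsq bp, ← Finset.sum_filter_add_sum_filter_not Finset.univ (· ∈ S)]
    have h1 : Finset.univ.filter (· ∈ S) = S := by
      ext i; simp
    rw [h1]
    have h2 : ∑ i ∈ Finset.univ.filter (¬ · ∈ S), (bp i)^2 = 0 := by
      apply Finset.sum_eq_zero; intro i hi
      rw [Finset.mem_filter] at hi
      rw [hbp i, if_neg hi.2]; ring
    rw [h2, add_zero]
    apply Finset.sum_congr rfl; intro i hi; rw [hbp i, if_pos hi]
  have hsum_bp : ∑ i, b i * bp i = -‖bp‖^2 := by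
    rw [hnormsq bp, ← Finset.sum_neg_distrib]
    exact Finset.sum_congr rfl fun i _ => hkeyp i
  -- properties of the minimizer
  have hsmul : ∀ i, (‖bp‖⁻¹ • bp : EuclideanSpace ℝ (Fin k)) i = ‖bp‖⁻¹ * bp i := fun i => rfl
  have hminnorm : ‖(‖bp‖⁻¹ • bp : EuclideanSpace ℝ (Fin k))‖ = 1 := by
    rw [norm_smul, norm_inv, norm_norm, inv_mul_cancel₀ hbpnorm.ne']
  have hminnn : ∀ i, 0 ≤ (‖bp‖⁻¹ • bp : EuclideanSpace ℝ (Fin k)) i := by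
    intro i; rw [hsmul]
    exact mul_nonneg (inv_nonneg.mpr hbpnorm.le) (hbpnn i)
  have hmincard : (Finset.univ.filter
      (fun i => (‖bp‖⁻¹ • bp : EuclideanSpace ℝ (Fin k)) i ≠ 0)).card ≤ p := by
    rw [← hScard]
    apply Finset.card_le_card
    intro i hi
    rw [Finset.mem_filter] at hi
    by_contra hiS
    apply hi.2
    rw [hsmul, hbp i, if_neg hiS, mul_zero]
  have hminval : ∑ i, b i * (‖bp‖⁻¹ • bp : EuclideanSpace ℝ (Fin k)) i = -‖bp‖ := by
    have : ∑ i, b i * (‖bp‖⁻¹ • bp : EuclideanSpace ℝ (Fin k)) i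
        = ‖bp‖⁻¹ * ∑ i, b i * bp i := by
      rw [Finset.mul_sum]
      exact Finset.sum_congr rfl fun i _ => by rw [hsmul]; ring
    rw [this, hsum_bp]
    field_simp
  refine ⟨⟨⟨‖bp‖⁻¹ • bp, hminnorm, hminnn, hmincard, hminval.symm⟩, ?_⟩,
    hminnorm, hminnn, hmincard, hminval⟩
  -- lower bound
  rintro v ⟨x, hx1, hxnn, hxcard, rfl⟩
  set T := Finset.univ.filter (fun i => x i ≠ 0) with hT
  have hxT : ∀ i ∉ T, x i = 0 := by
    intro i hi
    by_contra h
    exact hi (Finset.mem_filter.mpr ⟨Finset.mem_univ _, h⟩)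
  -- step 1:  ∑_T bm² ≤ ∑_S bm² = ‖bp‖²
  have hTS : ∑ i ∈ T, (bm i)^2 ≤ ∑ i ∈ S, (bm i)^2 := by
    have hcardTS : (T \ S).card ≤ (S \ T).card := by
      have h1 := Finset.card_sdiff_add_card_inter T S
      have h2 := Finset.card_sdiff_add_card_inter S T
      rw [Finset.inter_comm S T] at h2
      omega
    have hsd : ∑ i ∈ T \ S, (bm i)^2 ≤ ∑ i ∈ S \ T, (bm i)^2 := by
      rcases Finset.eq_empty_or_nonempty (S \ T) with he | hne'
      · have : T \ S = ∅ := Finset.card_eq_zero.mp (by simpa [he] using hcardTS)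
        rw [this, he]
      · obtain ⟨i₀, hi₀, hi₀min⟩ := Finset.exists_min_image (S \ T) bm hne'
        have hi₀S : i₀ ∈ S := (Finset.mem_sdiff.mp hi₀).1
        calc ∑ i ∈ T \ S, (bm i)^2
            ≤ ∑ _i ∈ T \ S, (bm i₀)^2 := by
              apply Finset.sum_le_sum
              intro j hj
              have hjS : j ∉ S := (Finset.mem_sdiff.mp hj).2
              exact pow_le_pow_left₀ (hbmnn j) (hStop i₀ hi₀S j hjS) 2
          _ = (T \ S).card * (bm i₀)^2 := by
              rw [Finset.sum_const, nsmul_eq_mul]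
          _ ≤ (S \ T).card * (bm i₀)^2 := by
              apply mul_le_mul_of_nonneg_right _ (sq_nonneg _)
              exact (Nat.cast_le (α := ℝ)).mpr hcardTS
          _ = ∑ _i ∈ S \ T, (bm i₀)^2 := by
              rw [Finset.sum_const, nsmul_eq_mul]
          _ ≤ ∑ i ∈ S \ T, (bm i)^2 := by
              apply Finset.sum_le_sum
              intro j hj
              exact pow_le_pow_left₀ (hbmnn i₀) (hi₀min j hj) 2
    calc ∑ i ∈ T, (bm i)^2 = ∑ i ∈ T ∩ S, (bm i)^2 + ∑ i ∈ T \ S, (bm i)^2 := by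
          rw [Finset.sum_inter_add_sum_sdiff]
      _ ≤ ∑ i ∈ S ∩ T, (bm i)^2 + ∑ i ∈ S \ T, (bm i)^2 := by
          rw [Finset.inter_comm]; exact add_le_add le_rfl hsd
      _ = ∑ i ∈ S, (bm i)^2 := Finset.sum_inter_add_sum_sdiff _ _ _
  -- step 2: Cauchy-Schwarz
  have hxsq : ∑ i ∈ T, (x i)^2 = 1 := by
    have : ∑ i ∈ T, (x i)^2 = ∑ i, (x i)^2 := by
      apply Finset.sum_subset (Finset.subset_univ T)
      intro i _ hi
      rw [hxT i hi]; ring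
    rw [this, ← hnormsq x, hx1]; norm_num
  have hCS : (∑ i ∈ T, bm i * x i)^2 ≤ ‖bp‖^2 := by
    calc (∑ i ∈ T, bm i * x i)^2 ≤ (∑ i ∈ T, (bm i)^2) * ∑ i ∈ T, (x i)^2 :=
          Finset.sum_mul_sq_le_sq_mul_sq T bm x
      _ ≤ ‖bp‖^2 := by rw [hxsq, mul_one, hbpsq]; exact hTS
  have hCS' : ∑ i ∈ T, bm i * x i ≤ ‖bp‖ := by
    nlinarith [Finset.sum_nonneg (fun i (_ : i ∈ T) => mul_nonneg (hbmnn i) (hxnn i))]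
  -- step 3: conclude
  have hstep : ∑ i, bm i * x i ≤ ‖bp‖ := by
    have : ∑ i ∈ T, bm i * x i = ∑ i, bm i * x i := by
      apply Finset.sum_subset (Finset.subset_univ T)
      intro i _ hi
      rw [hxT i hi]; ring
    linarith [this ▸ hCS']
  have hlb : ∀ i, -(bm i) * x i ≤ b i * x i := by
    intro i
    apply mul_le_mul_of_nonneg_right _ (hxnn i)
    rw [hbm i]
    have := le_max_left (-(b i)) 0
    linarith
  calc -‖bp‖ ≤ -∑ i, bm i * x i := by linarith
    _ = ∑ i, -(bm i) * x i := by rw [← Finset.sum_neg_distrib]; exact Finset.sum_congr rfl fun i _ => by ring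
    _ ≤ ∑ i, b i * x i := Finset.sum_le_sum fun i _ => hlb i
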